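/- Fix Y ∈ ℝ^{m×d} with rows y_j, weights a ∈ ℝ^n and b ∈ ℝ^m with strictly positive entries, and ε > 0. Suppose f : ℝ^{n×d} → ℝ^n and g : ℝ^{n×d} → ℝ^m are differentiable at X, and define P(X') ∈ ℝ^{n×m} by P(X')_{ij} = a_i b_j exp((f_i(X') + g_j(X') − ‖x'_i − y_j‖₂²)/ε). Assume the marginal constraints P(X')·1_m = a and P(X')ᵀ·1_n = b hold identically for all X' in a neighborhood of X. Then for every k ∈ {1,…,n} and t ∈ {1,…,d}, the partial derivatives at X satisfy, for all i ∈ {1,…,n}: a_i·(∂f_i/∂x_{k,t}) + Σ_{j=1}^m P_{ij}·(∂g_j/∂x_{k,t}) = δ_{ik}·Σ_{j=1}^m 2(x_{k,t} − y_{j,t})·P_{kj}; and for all j ∈ {1,…,m}: Σ_{i=1}^n P_{ij}·(∂f_i/∂x_{k,t}) + b_j·(∂g_j/∂x_{k,t}) = 2(x_{k,t} − y_{j,t})·P_{kj}, where P = P(X). Equivalently, the stacked Jacobians (∂f/∂x_k; ∂g/∂x_k) solve the linear system H·(∂f/∂x_k; ∂g/∂x_k) = (e_k·(B_k 1_m)ᵀ;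 B_kᵀ) with H = [[diag(a), P], [Pᵀ, diag(b)]] and (B_k)_{tj} = 2(x_{k,t} − y_{j,t})·P_{kj}. -/

import Mathlib

/-- Implicit-differentiation linear system for the optimal entropic dual
potentials with squared-Euclidean cost. If `f, g` are differentiable at `X`
and the coupling `P(X')_{ij} = a_i b_j exp((f_i(X') + g_j(X') − ‖x'_i − y_j‖²)/ε)`
satisfies the marginal constraints in a neighborhood of `X`, then the partial
derivatives of `(f, g)` in each coordinate direction `x_{k,t}` solve the
linear system `H·(∂f; ∂g) = (e_k (B_k 1)ᵀ; B_kᵀ)`,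
with `H = [[diag a, P], [Pᵀ, diag b]]` and `(B_k)_{tj} = 2(x_{k,t} − y_{j,t}) P_{kj}`. -/
theorem implicit_jacobian_linear_system
    (n m d : ℕ)
    (Y : Fin m → Fin d → ℝ)
    (a : Fin n → ℝ) (ha : ∀ i, 0 < a i)
    (b : Fin m → ℝ) (hb : ∀ j, 0 < b j)
    (ε : ℝ) (hε : 0 < ε)
    (f : (Fin n → Fin d → ℝ) → Fin n → ℝ)
    (g : (Fin n → Fin d → ℝ) → Fin m → ℝ)
    (X : Fin n → Fin d → ℝ)
    (hf : DifferentiableAt ℝ f X) (hg : DifferentiableAt ℝ g X)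
    (Pfun : (Fin n → Fin d → ℝ) → Fin n → Fin m → ℝ)
    (hPfun : ∀ X' i j, Pfun X' i j
        = a i * b j * Real.exp ((f X' i + g X' j - ∑ t, (X' i t - Y j t) ^ 2) / ε))
    (hmarg : ∀ᶠ X' in nhds X,
        (∀ i, ∑ j, Pfun X' i j = a i) ∧ (∀ j, ∑ i, Pfun X' i j = b j))
    (E : Fin n → Fin d → (Fin n → Fin d → ℝ))
    (hE : ∀ k t k' t', E k t k' t' = if k' = k ∧ t' = t then (1 : ℝ) else 0) :
    (∀ (k : Fin n) (t : Fin d) (i : Fin n),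
        a i * fderiv ℝ f X (E k t) i
          + ∑ j, Pfun X i j * fderiv ℝ g X (E k t) j
        = (if i = k then (1 : ℝ) else 0)
            * ∑ j, 2 * (X k t - Y j t) * Pfun X k j)
    ∧ (∀ (k : Fin n) (t : Fin d) (j : Fin m),
        (∑ i, Pfun X i j * fderiv ℝ f X (E k t) i)
          + b j * fderiv ℝ g X (E k t) j
        = 2 * (X k t - Y j t) * Pfun X k j) := by
  classical
  -- evaluation continuous linear maps
  let L : Fin n → Fin d → ((Fin n → Fin d → ℝ) →L[ℝ] ℝ) := fun i s =>
    (ContinuousLinearMap.proj (R := ℝ) (φ := fun _ : Fin d => ℝ) s).comp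
      (ContinuousLinearMap.proj (R := ℝ) (φ := fun _ : Fin n => Fin d → ℝ) i)
  have hLapp : ∀ i s v, L i s v = v i s := fun _ _ _ => rfl
  let F : Fin n → ((Fin n → Fin d → ℝ) →L[ℝ] ℝ) := fun i =>
    (ContinuousLinearMap.proj (R := ℝ) (φ := fun _ : Fin n => ℝ) i).comp (fderiv ℝ f X)
  let G : Fin m → ((Fin n → Fin d → ℝ) →L[ℝ] ℝ) := fun j =>
    (ContinuousLinearMap.proj (R := ℝ) (φ := fun _ : Fin m => ℝ) j).comp (fderiv ℝ g X)
  have hFapp : ∀ i v, F i v = fderiv ℝ f X v i := fun _ _ => rfl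
  have hGapp : ∀ j v, G j v = fderiv ℝ g X v j := fun _ _ => rfl
  have hF : ∀ i, HasFDerivAt (fun X' => f X' i) (F i) X := fun i =>
    ((ContinuousLinearMap.proj i (R := ℝ)
      (φ := fun _ : Fin n => ℝ)).hasFDerivAt).comp X hf.hasFDerivAt
  have hG : ∀ j, HasFDerivAt (fun X' => g X' j) (G j) X := fun j =>
    ((ContinuousLinearMap.proj j (R := ℝ)
      (φ := fun _ : Fin m => ℝ)).hasFDerivAt).comp X hg.hasFDerivAt
  let C : Fin n → Fin m → ((Fin n → Fin d → ℝ) →L[ℝ] ℝ) := fun i j =>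
    ∑ s, (2 * (X i s - Y j s)) • L i s
  have hCapp : ∀ i j v, C i j v = ∑ s, (2 * (X i s - Y j s)) * v i s := by
    intro i j v
    simp only [C, ContinuousLinearMap.sum_apply, ContinuousLinearMap.smul_apply,
      smul_eq_mul, hLapp]
  have hC : ∀ i j, HasFDerivAt (fun X' => ∑ s, (X' i s - Y j s) ^ 2) (C i j) X := by
    intro i j
    apply HasFDerivAt.fun_sum
    intro s _
    have h1 : HasFDerivAt (fun X' : Fin n → Fin d → ℝ => X' i s - Y j s) (L i s) X :=
      ((L i s).hasFDerivAt.sub_const (Y j s))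
    have := h1.fun_mul h1
    simpa [pow_two, two_mul, add_smul] using this
  -- derivative of each entry of the coupling
  let D : Fin n → Fin m → ((Fin n → Fin d → ℝ) →L[ℝ] ℝ) := fun i j =>
    (Pfun X i j / ε) • (F i + G j - C i j)
  have hDapp : ∀ i j v, D i j v
      = (Pfun X i j / ε) * (fderiv ℝ f X v i + fderiv ℝ g X v j - C i j v) :=
    fun _ _ _ => rfl
  have hD : ∀ i j, HasFDerivAt (fun X' => Pfun X' i j) (D i j) X := by
    intro i j
    have hfun : (fun X' => Pfun X' i j)
        = fun X' => a i * b j *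
            Real.exp ((f X' i + g X' j - ∑ s, (X' i s - Y j s) ^ 2) / ε) :=
      funext fun X' => hPfun X' i j
    rw [hfun]
    have hφ : HasFDerivAt
        (fun X' => (f X' i + g X' j - ∑ s, (X' i s - Y j s) ^ 2) / ε)
        (ε⁻¹ • (F i + G j - C i j)) X := by
      have h2 := (((hF i).add (hG j)).sub (hC i j)).const_mul ε⁻¹
      simpa [div_eq_inv_mul] using h2
    have h3 := hφ.exp.const_mul (a i * b j)
    have hDval : D i j = (a i * b j) •
        (Real.exp ((f X i + g X j - ∑ s, (X i s - Y j s) ^ 2) / ε) •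
          (ε⁻¹ • (F i + G j - C i j))) := by
      simp only [D, smul_smul]
      congr 1
      rw [hPfun]
      ring
    rw [hDval]
    exact h3
  have hmargX := hmarg.self_of_nhds
  -- row sums have zero derivative
  have hrow : ∀ i, (∑ j, D i j) = 0 := by
    intro i
    have hsum : HasFDerivAt (fun X' => ∑ j, Pfun X' i j) (∑ j, D i j) X :=
      HasFDerivAt.fun_sum (fun j _ => hD i j)
    have hconst : (fun X' => ∑ j, Pfun X' i j) =ᶠ[nhds X] fun _ => a i :=
      hmarg.mono (fun X' h => h.1 i)
    have h0 : HasFDerivAt (fun X' => ∑ j, Pfun X' i j) 0 X :=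
      ((hasFDerivAt_const (𝕜 := ℝ) (a i) X :
        HasFDerivAt (fun _ : Fin n → Fin d → ℝ => a i)
          (0 : (Fin n → Fin d → ℝ) →L[ℝ] ℝ) X)).congr_of_eventuallyEq hconst
    exact hsum.unique h0
  have hcol : ∀ j, (∑ i, D i j) = 0 := by
    intro j
    have hsum : HasFDerivAt (fun X' => ∑ i, Pfun X' i j) (∑ i, D i j) X :=
      HasFDerivAt.fun_sum (fun i _ => hD i j)
    have hconst : (fun X' => ∑ i, Pfun X' i j) =ᶠ[nhds X] fun _ => b j :=
      hmarg.mono (fun X' h => h.2 j)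
    have h0 : HasFDerivAt (fun X' => ∑ i, Pfun X' i j) 0 X :=
      ((hasFDerivAt_const (𝕜 := ℝ) (b j) X :
        HasFDerivAt (fun _ : Fin n → Fin d → ℝ => b j)
          (0 : (Fin n → Fin d → ℝ) →L[ℝ] ℝ) X)).congr_of_eventuallyEq hconst
    exact hsum.unique h0
  -- value of C on the basis direction
  have hCval : ∀ i j (k : Fin n) (t : Fin d),
      C i j (E k t) = if i = k then 2 * (X i t - Y j t) else 0 := by
    intro i j k t
    rw [hCapp]
    rcases eq_or_ne i k with h | h
    · subst h
      have : ∀ s : Fin d, (2 * (X i s - Y j s)) * (E i t i s)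
          = if s = t then 2 * (X i s - Y j s) else 0 := by
        intro s
        rw [hE]
        simp
      simp only [this]
      simp
    · have : ∀ s : Fin d, (2 * (X i s - Y j s)) * (E k t i s) = 0 := by
        intro s
        rw [hE]
        simp [h]
      simp [this, h]
  constructor
  · intro k t i
    have h00 : ∑ j, (D i j) (E k t) = 0 := by
      rw [← ContinuousLinearMap.sum_apply, hrow i]
      rfl
    have h0 : ∑ j, (Pfun X i j / ε) *
        (fderiv ℝ f X (E k t) i + fderiv ℝ g X (E k t) j
          - (if i = k then 2 * (X i t - Y j t) else 0)) = 0 := by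
      simp only [hDapp, hCval] at h00
      exact h00
    have h1 : ∑ j, Pfun X i j *
        (fderiv ℝ f X (E k t) i + fderiv ℝ g X (E k t) j
          - (if i = k then 2 * (X i t - Y j t) else 0)) = 0 := by
      have h2 : (∑ j, (Pfun X i j / ε) *
          (fderiv ℝ f X (E k t) i + fderiv ℝ g X (E k t) j
            - (if i = k then 2 * (X i t - Y j t) else 0)))
          = (∑ j, Pfun X i j *
          (fderiv ℝ f X (E k t) i + fderiv ℝ g X (E k t) j
            - (if i = k then 2 * (X i t - Y j t) else 0))) / ε := by
        rw [Finset.sum_div]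
        refine Finset.sum_congr rfl fun j _ => ?_
        ring
      rw [h2] at h0
      exact (div_eq_zero_iff.mp h0).resolve_right hε.ne'
    have h3 : ∑ j, Pfun X i j *
        (fderiv ℝ f X (E k t) i + fderiv ℝ g X (E k t) j
          - (if i = k then 2 * (X i t - Y j t) else 0))
        = (∑ j, Pfun X i j) * fderiv ℝ f X (E k t) i
          + (∑ j, Pfun X i j * fderiv ℝ g X (E k t) j)
          - ∑ j, Pfun X i j * (if i = k then 2 * (X i t - Y j t) else 0) := by
      rw [Finset.sum_mul, ← Finset.sum_add_distrib, ← Finset.sum_sub_distrib]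
      refine Finset.sum_congr rfl fun j _ => ?_
      ring
    rw [h3, hmargX.1 i] at h1
    rcases eq_or_ne i k with h | h
    · subst h
      have h4 : ∑ j, Pfun X i j * (2 * (X i t - Y j t))
          = ∑ j, 2 * (X i t - Y j t) * Pfun X i j := by
        refine Finset.sum_congr rfl fun j _ => ?_
        ring
      simp only [eq_self_iff_true, if_true, one_mul] at h1 ⊢
      rw [← h4]
      linarith
    · simp only [if_neg h, zero_mul, mul_zero, Finset.sum_const_zero] at h1 ⊢
      linarith
  · intro k t j
    have h00 : ∑ i, (D i j) (E k t) = 0 := by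
      rw [← ContinuousLinearMap.sum_apply, hcol j]
      rfl
    have h0 : ∑ i, (Pfun X i j / ε) *
        (fderiv ℝ f X (E k t) i + fderiv ℝ g X (E k t) j
          - (if i = k then 2 * (X i t - Y j t) else 0)) = 0 := by
      simp only [hDapp, hCval] at h00
      exact h00
    have h1 : ∑ i, Pfun X i j *
        (fderiv ℝ f X (E k t) i + fderiv ℝ g X (E k t) j
          - (if i = k then 2 * (X i t - Y j t) else 0)) = 0 := by
      have h2 : (∑ i, (Pfun X i j / ε) *
          (fderiv ℝ f X (E k t) i + fderiv ℝ g X (E k t) j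
            - (if i = k then 2 * (X i t - Y j t) else 0)))
          = (∑ i, Pfun X i j *
          (fderiv ℝ f X (E k t) i + fderiv ℝ g X (E k t) j
            - (if i = k then 2 * (X i t - Y j t) else 0))) / ε := by
        rw [Finset.sum_div]
        refine Finset.sum_congr rfl fun i _ => ?_
        ring
      rw [h2] at h0
      exact (div_eq_zero_iff.mp h0).resolve_right hε.ne'
    have h3 : ∑ i, Pfun X i j *
        (fderiv ℝ f X (E k t) i + fderiv ℝ g X (E k t) j
          - (if i = k then 2 * (X i t - Y j t) else 0))
        = (∑ i, Pfun X i j * fderiv ℝ f X (E k t) i)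
          + (∑ i, Pfun X i j) * fderiv ℝ g X (E k t) j
          - ∑ i, (if i = k then Pfun X i j * (2 * (X i t - Y j t)) else 0) := by
      rw [Finset.sum_mul, ← Finset.sum_add_distrib, ← Finset.sum_sub_distrib]
      refine Finset.sum_congr rfl fun i _ => ?_
      rcases eq_or_ne i k with h | h <;> simp [h] <;> ring
    rw [h3, hmargX.2 j, Finset.sum_ite_eq' Finset.univ k
      (fun i => Pfun X i j * (2 * (X i t - Y j t)))] at h1
    simp only [Finset.mem_univ, if_pos] at h1
    linarith
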